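/- Let Γ_1 and Γ_2 be graphs with maximum degrees Δ_1 and Δ_2 respectively. If S_1 is an offensive k_1-alliance in Γ_1 and S_2 is an offensive k_2-alliance in Γ_2, then S_1 × S_2 is an offensive k-alliance in the Cartesian product Γ_1 × Γ_2 for k = min{k_2 - Δ_1, k_1 - Δ_2}. -/

import Mathlib

open Finset

variable {V V₁ V₂ : Type*}

/-- Number of neighbors of `v` lying in `S`. -/
def degOn [Fintype V] [DecidableEq V] (G : SimpleGraph V) [DecidableRel G.Adj]
    (S : Finset V) (v : V) : ℕ :=
  (G.neighborFinset v ∩ S).card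

/-- `S` is a dominating set of `G`. -/
def IsDominating [Fintype V] (G : SimpleGraph V) (S : Finset V) : Prop :=
  ∀ v ∉ S, ∃ u ∈ S, G.Adj u v

/-- `S` is a global offensive `k`-alliance in `G`. -/
def IsGOA [Fintype V] [DecidableEq V] (G : SimpleGraph V) [DecidableRel G.Adj]
    (k : ℤ) (S : Finset V) : Prop :=
  IsDominating G S ∧ ∀ v ∉ S, (degOn G Sᶜ v : ℤ) + k ≤ (degOn G S v : ℤ)

/-- `S` is an offensive `k`-alliance in `G`: it is nonempty and every boundary
vertex has at least `k` more neighbors inside `S` than outside. -/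
def IsOA [Fintype V] [DecidableEq V] (G : SimpleGraph V) [DecidableRel G.Adj]
    (k : ℤ) (S : Finset V) : Prop :=
  S.Nonempty ∧ ∀ v ∉ S, (∃ u ∈ S, G.Adj u v) →
    (degOn G Sᶜ v : ℤ) + k ≤ (degOn G S v : ℤ)

/-- `S` is an `r`-dependent set in `G`. -/
def IsDependent [Fintype V] [DecidableEq V] (G : SimpleGraph V) [DecidableRel G.Adj]
    (r : ℕ) (S : Finset V) : Prop :=
  ∀ v ∈ S, degOn G S v ≤ r

/-- `S` is a `τ`-dominating set in `G`. -/
def IsTauDominating [Fintype V] [DecidableEq V] (G : SimpleGraph V) [DecidableRel G.Adj]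
    (τ : ℝ) (S : Finset V) : Prop :=
  ∀ v ∉ S, τ * (G.degree v : ℝ) ≤ (degOn G S v : ℝ)

/-- The global offensive `k`-alliance number of `G`. -/
noncomputable def goaNum [Fintype V] [DecidableEq V] (G : SimpleGraph V)
    [DecidableRel G.Adj] (k : ℤ) : ℕ :=
  sInf {t | ∃ S : Finset V, IsGOA G k S ∧ S.card = t}

/-- The maximum cardinality of an `r`-dependent set in `G`. -/
noncomputable def depNum [Fintype V] [DecidableEq V] (G : SimpleGraph V)
    [DecidableRel G.Adj] (r : ℕ) : ℕ :=
  sSup {t | ∃ S : Finset V, IsDependent G r S ∧ S.card = t}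

lemma degOn_compl [Fintype V] [DecidableEq V] (G : SimpleGraph V) [DecidableRel G.Adj]
    (S : Finset V) (v : V) : (degOn G Sᶜ v : ℤ) = G.degree v - degOn G S v := by
  unfold degOn
  have : G.neighborFinset v ∩ Sᶜ = G.neighborFinset v \ S := by
    ext x; simp
  rw [this, SimpleGraph.degree, card_sdiff_add_card_inter (G.neighborFinset v) S |>.symm]
  push_cast; ring

lemma degOn_boxProd [Fintype V₁] [DecidableEq V₁] [Fintype V₂] [DecidableEq V₂]
    (G : SimpleGraph V₁) (H : SimpleGraph V₂) [DecidableRel G.Adj] [DecidableRel H.Adj]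
    [DecidableRel (G □ H).Adj] (S₁ : Finset V₁) (S₂ : Finset V₂) (v : V₁ × V₂) :
    degOn (G □ H) (S₁ ×ˢ S₂) v =
      (if v.2 ∈ S₂ then degOn G S₁ v.1 else 0) + (if v.1 ∈ S₁ then degOn H S₂ v.2 else 0) := by
  classical
  unfold degOn
  rw [SimpleGraph.neighborFinset_boxProd, disjUnion_eq_union, union_inter_distrib_right,
    card_union_of_disjoint]
  · congr 1
    · have : (G.neighborFinset v.1 ×ˢ {v.2}) ∩ (S₁ ×ˢ S₂)
          = (G.neighborFinset v.1 ∩ S₁) ×ˢ ({v.2} ∩ S₂) := by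
        ext ⟨a,b⟩; simp [Prod.ext_iff]; aesop
      rw [this, card_product]
      by_cases h : v.2 ∈ S₂ <;> simp [h, singleton_inter_of_mem, singleton_inter_of_notMem]
    · have : ({v.1} ×ˢ H.neighborFinset v.2) ∩ (S₁ ×ˢ S₂)
          = ({v.1} ∩ S₁) ×ˢ (H.neighborFinset v.2 ∩ S₂) := by
        ext ⟨a,b⟩; simp [Prod.ext_iff]; aesop
      rw [this, card_product]
      by_cases h : v.1 ∈ S₁ <;> simp [h, singleton_inter_of_mem, singleton_inter_of_notMem]
  · refine Disjoint.mono inter_subset_left inter_subset_left ?_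
    exact Finset.disjoint_product.mpr <| Or.inl <| SimpleGraph.neighborFinset_disjoint_singleton _ _

theorem stmt_14 [Fintype V₁] [DecidableEq V₁] [Fintype V₂] [DecidableEq V₂]
    (G₁ : SimpleGraph V₁) (G₂ : SimpleGraph V₂)
    [DecidableRel G₁.Adj] [DecidableRel G₂.Adj] [DecidableRel (G₁ □ G₂).Adj]
    (k₁ k₂ : ℤ) (S₁ : Finset V₁) (S₂ : Finset V₂)
    (h₁ : IsOA G₁ k₁ S₁) (h₂ : IsOA G₂ k₂ S₂) :
    IsOA (G₁ □ G₂) (min (k₂ - (G₁.maxDegree : ℤ)) (k₁ - (G₂.maxDegree : ℤ)))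
      (S₁ ×ˢ S₂) := by
  classical
  refine ⟨h₁.1.product h₂.1, ?_⟩
  rintro ⟨v₁, v₂⟩ hv ⟨⟨u₁, u₂⟩, hu, hadj⟩
  rw [Finset.mem_product] at hu
  rw [Finset.mem_product, not_and_or] at hv
  rw [degOn_compl, SimpleGraph.degree_boxProd, degOn_boxProd]
  rw [SimpleGraph.boxProd_adj] at hadj
  have hd₁ : (G₁.degree v₁ : ℤ) ≤ G₁.maxDegree := by
    exact_mod_cast G₁.degree_le_maxDegree v₁
  have hd₂ : (G₂.degree v₂ : ℤ) ≤ G₂.maxDegree := by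
    exact_mod_cast G₂.degree_le_maxDegree v₂
  simp only at hv hu hadj ⊢
  rcases hadj with ⟨hadj, rfl⟩ | ⟨hadj, rfl⟩
  · -- now v₂ is u₂, u₂ ∈ S₂, hence v₁ ∉ S₁
    have hv₁ : v₁ ∉ S₁ := by tauto
    have key := h₁.2 v₁ hv₁ ⟨u₁, hu.1, hadj⟩
    rw [degOn_compl] at key
    rw [if_pos hu.2, if_neg hv₁, add_zero]
    have hmin : min (k₂ - (G₁.maxDegree : ℤ)) (k₁ - (G₂.maxDegree : ℤ))
        ≤ k₁ - (G₂.maxDegree : ℤ) := min_le_right _ _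
    push_cast
    linarith
  · have hv₂ : v₂ ∉ S₂ := by tauto
    have key := h₂.2 v₂ hv₂ ⟨u₂, hu.2, hadj⟩
    rw [degOn_compl] at key
    rw [if_pos hu.1, if_neg hv₂, zero_add]
    have hmin : min (k₂ - (G₁.maxDegree : ℤ)) (k₁ - (G₂.maxDegree : ℤ))
        ≤ k₂ - (G₁.maxDegree : ℤ) := min_le_left _ _
    push_cast
    linarith
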